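/- Let C and M be abelian categories with enough projectives, and let F : C ⥤ M be a functor admitting a right adjoint H : M ⥤ C. Assume that F sends projective objects of C to projective objects of M, and that every projective object of M is a retract (direct summand) of F(P) for some projective object P of C. Then the Eilenberg–Moore comparison functor M ⥤ EM(H∘F), to the category of algebras over the monad H∘F on C, is an equivalence of categories. -/

import Mathlib

open CategoryTheory CategoryTheory.Limits

namespace ProofAux

universe v₁ v₂ u₁ u₂

namespace Internal

open CategoryTheory.Monad

variable {C : Type u₁} {D : Type u₂}
variable [Category.{v₁} C] [Category.{v₂} D]
variable {G : D ⥤ C} {F : C ⥤ D} (adj : F ⊣ G)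

noncomputable section

instance main_pair_reflexive (A : adj.toMonad.Algebra) :
    IsReflexivePair (F.map A.a) (adj.counit.app (F.obj A.A)) := by
  apply IsReflexivePair.mk' (F.map (adj.unit.app _)) _ _
  · exact (F.map_comp _ _).symm.trans ((congr_arg F.map A.unit).trans (F.map_id _))
  · exact adj.left_triangle_components _

/-- The object function for the left adjoint to the comparison functor. -/
def comparisonLeftAdjointObj (A : adj.toMonad.Algebra)
    [HasCoequalizer (F.map A.a) (adj.counit.app _)] : D :=
  coequalizer (F.map A.a) (adj.counit.app _)

set_option linter.unusedVariables false in
/-- Hom equivalence. -/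
@[simps!]
def comparisonLeftAdjointHomEquiv (A : adj.toMonad.Algebra) (B : D)
    [HasCoequalizer (F.map A.a) (adj.counit.app (F.obj A.A))] :
    (comparisonLeftAdjointObj adj A ⟶ B) ≃ (A ⟶ (comparison adj).obj B) :=
  calc
    (comparisonLeftAdjointObj adj A ⟶ B) ≃ { f : F.obj A.A ⟶ B // _ } :=
      Cofork.IsColimit.homIso (colimit.isColimit _) B
    _ ≃ { g : A.A ⟶ G.obj B // G.map (F.map g) ≫ G.map (adj.counit.app B) = A.a ≫ g } := by
      refine (adj.homEquiv _ _).subtypeEquiv ?_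
      intro f
      rw [← (adj.homEquiv _ _).injective.eq_iff, Adjunction.homEquiv_naturality_left,
        adj.homEquiv_unit, adj.homEquiv_unit]
      erw [G.map_comp]
      dsimp
      erw [adj.right_triangle_components_assoc, ← G.map_comp, F.map_comp, Category.assoc,
        adj.counit_naturality, adj.left_triangle_components_assoc]
      apply eq_comm
    _ ≃ (A ⟶ (comparison adj).obj B) :=
      { toFun := fun g =>
          { f := _
            h := g.prop }
        invFun := fun f => ⟨f.f, f.h⟩
        left_inv := fun g => by ext; rfl
        right_inv := fun f => by ext; rfl }

/-- Construct the adjunction to the comparison functor. -/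
def leftAdjointComparison
    [∀ A : adj.toMonad.Algebra, HasCoequalizer (F.map A.a)
      (adj.counit.app (F.obj A.A))] :
    adj.toMonad.Algebra ⥤ D := by
  refine
    Adjunction.leftAdjointOfEquiv (G := comparison adj)
      (F_obj := fun A => comparisonLeftAdjointObj adj A) (fun A B => ?_) ?_
  · apply comparisonLeftAdjointHomEquiv
  · intro A B B' g h
    ext1
    simp [Cofork.IsColimit.homIso, Adjunction.homEquiv_unit, Trans.trans, Equiv.trans_apply]
    exact (congr_arg (adj.homEquiv _ _) (Category.assoc _ _ _).symm).trans
      (adj.homEquiv_naturality_right _ _)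

/-- The comparison adjunction. -/
@[simps! counit]
def comparisonAdjunction
    [∀ A : adj.toMonad.Algebra, HasCoequalizer (F.map A.a)
      (adj.counit.app (F.obj A.A))] :
    leftAdjointComparison adj ⊣ comparison adj :=
  Adjunction.adjunctionOfEquivLeft _ _

variable {adj}

theorem comparisonAdjunction_unit_f_aux
    [∀ A : adj.toMonad.Algebra, HasCoequalizer (F.map A.a)
      (adj.counit.app (F.obj A.A))]
    (A : adj.toMonad.Algebra) :
    ((comparisonAdjunction adj).unit.app A).f =
      adj.homEquiv A.A _
        (coequalizer.π (F.map A.a) (adj.counit.app (F.obj A.A))) :=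
  congr_arg (adj.homEquiv _ _) (Category.comp_id _)

/-- The unit cofork. -/
@[simps! pt]
def unitCofork (A : adj.toMonad.Algebra)
    [HasCoequalizer (F.map A.a) (adj.counit.app (F.obj A.A))] :
    Cofork (G.map (F.map A.a)) (G.map (adj.counit.app (F.obj A.A))) :=
  Cofork.ofπ (G.map (coequalizer.π (F.map A.a) (adj.counit.app (F.obj A.A))))
    (by
      change _ = G.map _ ≫ _
      exact (G.map_comp _ _).symm.trans ((congr_arg G.map (coequalizer.condition _ _)).trans (G.map_comp _ _)))

@[simp]
theorem unitCofork_π (A : adj.toMonad.Algebra)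
    [HasCoequalizer (F.map A.a) (adj.counit.app (F.obj A.A))] :
    (unitCofork A).π = G.map (coequalizer.π (F.map A.a) (adj.counit.app (F.obj A.A))) :=
  rfl

theorem comparisonAdjunction_unit_f
    [∀ A : adj.toMonad.Algebra, HasCoequalizer (F.map A.a)
      (adj.counit.app (F.obj A.A))]
    (A : adj.toMonad.Algebra) :
    ((comparisonAdjunction adj).unit.app A).f = (beckCoequalizer A).desc (unitCofork A) := by
  apply Limits.Cofork.IsColimit.hom_ext (beckCoequalizer A)
  erw [Cofork.IsColimit.π_desc]
  dsimp only [beckCofork_π, unitCofork_π]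
  erw [comparisonAdjunction_unit_f_aux, ← adj.homEquiv_naturality_left A.a, coequalizer.condition,
    adj.homEquiv_naturality_right, adj.homEquiv_unit, Category.assoc]
  apply adj.right_triangle_components_assoc

variable (adj)

/-- The counit cofork. -/
@[simps!]
def counitCofork (B : D) :
    Cofork (F.map (G.map (adj.counit.app B)))
      (adj.counit.app (F.obj (G.obj B))) :=
  Cofork.ofπ (adj.counit.app B) (adj.counit_naturality _)

variable {adj} in
/-- The unit cofork is a colimit provided `G` preserves it. -/
def unitColimitOfPreservesCoequalizer (A : adj.toMonad.Algebra)
    [HasCoequalizer (F.map A.a) (adj.counit.app (F.obj A.A))]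
    [PreservesColimit (parallelPair (F.map A.a) (adj.counit.app (F.obj A.A))) G] :
    IsColimit (unitCofork (G := G) A) :=
  isColimitOfHasCoequalizerOfPreservesColimit G _ _

/-- The counit cofork is a colimit provided `G` reflects it. -/
def counitCoequalizerOfReflectsCoequalizer (B : D)
    [ReflectsColimit (parallelPair (F.map (G.map (adj.counit.app B)))
      (adj.counit.app (F.obj (G.obj B)))) G] :
    IsColimit (counitCofork (adj := adj) B) :=
  isColimitOfIsColimitCoforkMap G _ (beckCoequalizer ((comparison adj).obj B))

instance
    [∀ A : adj.toMonad.Algebra, HasCoequalizer (F.map A.a) (adj.counit.app (F.obj A.A))]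
    (B : D) : HasColimit (parallelPair
      (F.map (G.map (NatTrans.app adj.counit B)))
      (NatTrans.app adj.counit (F.obj (G.obj B)))) :=
  inferInstanceAs <| HasCoequalizer
    (F.map ((comparison adj).obj B).a)
    (adj.counit.app (F.obj ((comparison adj).obj B).A))

theorem comparisonAdjunction_counit_app
    [∀ A : adj.toMonad.Algebra, HasCoequalizer (F.map A.a) (adj.counit.app (F.obj A.A))] (B : D) :
    (comparisonAdjunction adj).counit.app B = colimit.desc _ (counitCofork adj B) := by
  apply coequalizer.hom_ext
  erw [colimit.ι_desc, colimit.ι_desc]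
  simp [Adjunction.homEquiv_counit]
  show (adj.homEquiv _ B).symm (𝟙 _) = _
  simp [Adjunction.homEquiv_counit]

end

end Internal

open CategoryTheory.Monad Internal in
/-- Universe-heterogeneous crude monadicity theorem, giving directly that the
comparison functor is an equivalence. -/
theorem comparison_isEquivalence_of_reflexive
    {C : Type u₁} {D : Type u₂} [Category.{v₁} C] [Category.{v₂} D]
    {G : D ⥤ C} {F : C ⥤ D} (adj : F ⊣ G)
    [HasReflexiveCoequalizers D] [G.ReflectsIsomorphisms]
    [PreservesColimitsOfShape WalkingParallelPair G] :
    (Monad.comparison adj).IsEquivalence := by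
  haveI : ∀ A : Monad.Algebra adj.toMonad,
      HasCoequalizer (F.map A.a) (adj.counit.app (F.obj A.A)) :=
    fun A => HasReflexiveCoequalizers.has_coeq _ _
  haveI : ∀ X : Monad.Algebra adj.toMonad,
      PreservesColimit (parallelPair (F.map X.a)
        (NatTrans.app adj.counit (F.obj X.A))) G :=
    fun _ => inferInstance
  have : ∀ (X : Monad.Algebra adj.toMonad), IsIso ((comparisonAdjunction adj).unit.app X) := by
    intro X
    apply
      @isIso_of_reflects_iso _ _ _ _ _ _ _ (Monad.forget adj.toMonad) ?_ _
    · change IsIso ((comparisonAdjunction adj).unit.app X).f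
      rw [comparisonAdjunction_unit_f]
      exact (IsColimit.coconePointUniqueUpToIso (beckCoequalizer X)
        (unitColimitOfPreservesCoequalizer X)).isIso_hom
  have : ∀ (Y : D), IsIso ((comparisonAdjunction adj).counit.app Y) := by
    intro Y
    rw [comparisonAdjunction_counit_app]
    change IsIso (IsColimit.coconePointUniqueUpToIso _ ?_).hom
    infer_instance
    apply @counitCoequalizerOfReflectsCoequalizer _ _ _ _ _ _ _ _ ?_
    apply reflectsColimit_of_reflectsIsomorphisms
  exact (comparisonAdjunction adj).toEquivalence.isEquivalence_inverse

end ProofAux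

/-- Reconstruction: if `F ⊣ H` is an adjunction between abelian categories with
enough projectives such that `F` preserves projectives and every projective of
`M` is a retract of `F P` for a projective `P`, then the Eilenberg–Moore
comparison functor `M ⥤ EM(H ∘ F)` is an equivalence. -/
theorem comparison_equivalence_of_projective_generator
    {C : Type*} [Category C] [Abelian C] [EnoughProjectives C]
    {M : Type*} [Category M] [Abelian M] [EnoughProjectives M]
    (F : C ⥤ M) (H : M ⥤ C) (adj : F ⊣ H)
    (hF : ∀ P : C, Projective P → Projective (F.obj P))
    (hgen : ∀ Q : M, Projective Q → ∃ P : C, Projective P ∧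
      ∃ (i : Q ⟶ F.obj P) (r : F.obj P ⟶ Q), i ≫ r = 𝟙 Q) :
    (Monad.comparison adj).IsEquivalence := by
  haveI : F.IsLeftAdjoint := ⟨H, ⟨adj⟩⟩
  haveI : H.IsRightAdjoint := ⟨F, ⟨adj⟩⟩
  haveI := adj.rightAdjoint_preservesLimits
  -- H preserves epimorphisms
  haveI hepi : H.PreservesEpimorphisms := by
    constructor
    intro X Y e he
    haveI : Projective (F.obj (Projective.over (H.obj Y))) :=
      hF _ inferInstance
    let t : F.obj (Projective.over (H.obj Y)) ⟶ Y :=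
      (adj.homEquiv _ _).symm (Projective.π (H.obj Y))
    have h1 : Projective.factorThru t e ≫ e = t := Projective.factorThru_comp t e
    have h2 : Projective.π (H.obj Y) =
        adj.unit.app _ ≫ H.map (Projective.factorThru t e) ≫ H.map e :=
      calc Projective.π (H.obj Y)
          = adj.homEquiv _ _ t := ((adj.homEquiv _ _).apply_symm_apply _).symm
        _ = adj.unit.app _ ≫ H.map t := adj.homEquiv_unit _ _ _
        _ = adj.unit.app _ ≫ H.map (Projective.factorThru t e ≫ e) := by rw [h1]
        _ = adj.unit.app _ ≫ H.map (Projective.factorThru t e) ≫ H.map e := by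
            rw [H.map_comp]
    haveI : Epi ((adj.unit.app (Projective.over (H.obj Y)) ≫
        H.map (Projective.factorThru t e)) ≫ H.map e) := by
      rw [Category.assoc, ← h2]; infer_instance
    exact epi_of_epi (adj.unit.app _ ≫ H.map (Projective.factorThru t e)) (H.map e)
  -- H reflects isomorphisms
  haveI hrefl : H.ReflectsIsomorphisms := by
    constructor
    intro X Y f hiso
    have hepi' : Epi f := by
      obtain ⟨P, hP, i, r, hir⟩ := hgen (Projective.over Y) inferInstance
      let u : P ⟶ H.obj X :=
        adj.homEquiv P Y (r ≫ Projective.π Y) ≫ inv (H.map f)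
      have hu : u ≫ H.map f = adj.homEquiv P Y (r ≫ Projective.π Y) := by
        simp [u]
      have : ((adj.homEquiv P X).symm u) ≫ f = r ≫ Projective.π Y := by
        rw [← Adjunction.homEquiv_naturality_right_symm, hu, Equiv.symm_apply_apply]
      have : (i ≫ (adj.homEquiv P X).symm u) ≫ f = Projective.π Y := by
        rw [Category.assoc, this, ← Category.assoc, hir, Category.id_comp]
      exact epi_of_epi_fac this
    have hmono : Mono f := by
      have hk : kernel.ι f = 0 := by
        obtain ⟨P, hP, i, r, hir⟩ := hgen (Projective.over (kernel f)) inferInstance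
        set w : F.obj P ⟶ X := r ≫ Projective.π (kernel f) ≫ kernel.ι f with hw
        have hwf : w ≫ f = 0 := by
          simp [hw, Category.assoc, kernel.condition]
        have h0 : adj.homEquiv P X w ≫ H.map f = 0 := by
          rw [← Adjunction.homEquiv_naturality_right, hwf, adj.homEquiv_unit,
            H.map_zero, comp_zero]
        have h1 : adj.homEquiv P X w = 0 := by
          haveI : IsIso (H.map f) := hiso
          rw [← cancel_mono (H.map f), h0, zero_comp]
        have h2 : w = 0 := by
          have := congrArg (adj.homEquiv P X).symm h1
          rw [Equiv.symm_apply_apply] at this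
          rw [this, adj.homEquiv_counit]
          simp
        have : Projective.π (kernel f) ≫ kernel.ι f = 0 := by
          have := congrArg (fun z => i ≫ z) h2
          simpa [hw, ← Category.assoc, hir] using this
        exact zero_of_epi_comp _ this
      exact Abelian.mono_of_kernel_ι_eq_zero f hk
    exact isIso_of_mono_of_epi f
  -- H preserves finite colimits
  haveI : PreservesBinaryBiproducts H := preservesBinaryBiproducts_of_preservesBinaryProducts H
  haveI : H.Additive := Functor.additive_of_preservesBinaryBiproducts H
  haveI : H.PreservesHomology := Functor.preservesHomology_of_preservesEpis_and_kernels H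
  haveI : PreservesFiniteColimits H := Functor.preservesFiniteColimits_of_preservesHomology H
  exact ProofAux.comparison_isEquivalence_of_reflexive adj
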